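/- Let H be a finite-dimensional Hopf algebra over a field F with left integrals Λ ∈ H, φ ∈ Ĥ, normalized with φ(Λ) = 1. With m̃(a ⊗ b) = a₍₁₎ φ(S⁻¹(b) a₍₂₎), the composite m̃ ∘ Δ : H → H equals multiplication by the scalar φ(1): m̃(Δ(a)) = φ(1)·a for all a ∈ H. -/

import Mathlib

open TensorProduct

section Aux
variable {F H : Type*} [Field F] [Ring H] [HopfAlgebra F H]
open Coalgebra HopfAlgebra LinearMap

/-- A representation of `comul (a*b)` built from representations of `comul a`, `comul b`. -/
noncomputable def reprMul {a b : H} {ι κ : Type*} (ra : Coalgebra.Repr F a ι) (rb : Coalgebra.Repr F b κ) :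
    Coalgebra.Repr F (a * b) (ι × κ) where
  index := ra.index ×ˢ rb.index
  left p := ra.left p.1 * rb.left p.2
  right p := ra.right p.1 * rb.right p.2
  eq := by
    rw [Finset.sum_product]
    rw [show (CoalgebraStruct.comul (a * b) : H ⊗[F] H)
        = CoalgebraStruct.comul a * CoalgebraStruct.comul b from Bialgebra.comul_mul a b,
      ← ra.eq, ← rb.eq, Finset.sum_mul_sum]
    simp [Algebra.TensorProduct.tmul_mul_tmul]

lemma collapseA {ι : Type*} {x : H} (r : Coalgebra.Repr F x ι) (w : H) :
    ∑ p ∈ r.index, antipode (R := F) (r.left p) * (r.right p * w)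
      = Coalgebra.counit (R := F) x • w := by
  simp only [← mul_assoc]
  rw [← Finset.sum_mul, HopfAlgebra.sum_antipode_mul_eq_smul r, smul_mul_assoc, one_mul]

lemma collapseB {ι : Type*} {x : H} (r : Coalgebra.Repr F x ι) (c d : H) :
    ∑ p ∈ r.index, (c * r.left p) * (antipode (R := F) (r.right p) * d)
      = Coalgebra.counit (R := F) x • (c * d) := by
  have : ∀ p, (c * r.left p) * (antipode (R := F) (r.right p) * d)
      = c * ((r.left p * antipode (R := F) (r.right p)) * d) := by
    intro p; simp only [mul_assoc]
  simp only [this]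
  rw [← Finset.mul_sum, ← Finset.sum_mul,
    HopfAlgebra.sum_mul_antipode_eq_smul r, smul_mul_assoc, one_mul, mul_smul_comm]

lemma sum_counit_smul {ι : Type*} {x : H} (r : Coalgebra.Repr F x ι) :
    ∑ i ∈ r.index, Coalgebra.counit (R := F) (r.left i) • r.right i = x := by
  have : ∑ i ∈ r.index, Coalgebra.counit (R := F) (r.left i) • r.right i
      = TensorProduct.lid F H
          (∑ i ∈ r.index, Coalgebra.counit (R := F) (r.left i) ⊗ₜ[F] r.right i) := by
    rw [map_sum]; simp
  rw [this, Coalgebra.sum_counit_tmul_eq r]; simp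

lemma sum_smul_counit {ι : Type*} {x : H} (r : Coalgebra.Repr F x ι) :
    ∑ i ∈ r.index, Coalgebra.counit (R := F) (r.right i) • r.left i = x := by
  have : ∑ i ∈ r.index, Coalgebra.counit (R := F) (r.right i) • r.left i
      = TensorProduct.rid F H
          (∑ i ∈ r.index, r.left i ⊗ₜ[F] Coalgebra.counit (R := F) (r.right i)) := by
    rw [map_sum]; simp
  rw [this, Coalgebra.sum_tmul_counit_eq r]; simp

/-- The 6-linear map `(x₁⊗(x₂⊗x₃)) ⊗ (y₁⊗(y₂⊗y₃)) ↦ S(x₁y₁) * ((x₂y₂) * (S y₃ * S x₃))`. -/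
noncomputable def psi : (H ⊗[F] (H ⊗[F] H)) ⊗[F] (H ⊗[F] (H ⊗[F] H)) →ₗ[F] H :=
  LinearMap.mul' F H ∘ₗ
    TensorProduct.map (antipode (R := F) ∘ₗ LinearMap.mul' F H)
      (LinearMap.mul' F H ∘ₗ
        TensorProduct.map (LinearMap.mul' F H)
          (LinearMap.mul' F H ∘ₗ
            TensorProduct.map (antipode (R := F)) (antipode (R := F)) ∘ₗ
              (TensorProduct.comm F H H).toLinearMap) ∘ₗ
        (TensorProduct.tensorTensorTensorComm F H H H H).toLinearMap) ∘ₗ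
    (TensorProduct.tensorTensorTensorComm F H (H ⊗[F] H) H (H ⊗[F] H)).toLinearMap

@[simp] lemma psi_tmul (x₁ x₂ x₃ y₁ y₂ y₃ : H) :
    psi ((x₁ ⊗ₜ[F] (x₂ ⊗ₜ[F] x₃)) ⊗ₜ[F] (y₁ ⊗ₜ[F] (y₂ ⊗ₜ[F] y₃)))
      = antipode (R := F) (x₁ * y₁) *
        ((x₂ * y₂) * (antipode (R := F) y₃ * antipode (R := F) x₃)) := by
  simp [psi]



lemma antipode_mul_rev (a b : H) :
    antipode (R := F) (a * b) = antipode (R := F) b * antipode (R := F) a := by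
  classical
  let ra := Coalgebra.Repr.arbitrary F a
  let rb := Coalgebra.Repr.arbitrary F b
  let r1a : ∀ i, Coalgebra.Repr F (ra.left i) (H × H) := fun i => Coalgebra.Repr.arbitrary F _
  let r2a : ∀ i, Coalgebra.Repr F (ra.right i) (H × H) := fun i => Coalgebra.Repr.arbitrary F _
  let r1b : ∀ j, Coalgebra.Repr F (rb.left j) (H × H) := fun j => Coalgebra.Repr.arbitrary F _
  let r2b : ∀ j, Coalgebra.Repr F (rb.right j) (H × H) := fun j => Coalgebra.Repr.arbitrary F _
  have hA := Coalgebra.sum_tmul_tmul_eq ra r1a r2a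
  have hB := Coalgebra.sum_tmul_tmul_eq rb r1b r2b
  have h1 : psi ((∑ i ∈ ra.index, ∑ k ∈ (r1a i).index,
        (r1a i).left k ⊗ₜ[F] ((r1a i).right k ⊗ₜ[F] ra.right i)) ⊗ₜ[F]
      (∑ j ∈ rb.index, ∑ l ∈ (r1b j).index,
        (r1b j).left l ⊗ₜ[F] ((r1b j).right l ⊗ₜ[F] rb.right j)))
      = antipode (R := F) b * antipode (R := F) a := by
    simp only [TensorProduct.sum_tmul, TensorProduct.tmul_sum, map_sum, psi_tmul]
    calc
      ∑ j ∈ rb.index, ∑ l ∈ (r1b j).index, ∑ i ∈ ra.index, ∑ k ∈ (r1a i).index,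
          antipode (R := F) ((r1a i).left k * (r1b j).left l) *
            ((r1a i).right k * (r1b j).right l *
              (antipode (R := F) (rb.right j) * antipode (R := F) (ra.right i)))
        = ∑ j ∈ rb.index, ∑ i ∈ ra.index, ∑ k ∈ (r1a i).index, ∑ l ∈ (r1b j).index,
          antipode (R := F) ((r1a i).left k * (r1b j).left l) *
            ((r1a i).right k * (r1b j).right l *
              (antipode (R := F) (rb.right j) * antipode (R := F) (ra.right i))) := by
          refine Finset.sum_congr rfl fun j _ => ?_
          rw [Finset.sum_comm]
          exact Finset.sum_congr rfl fun i _ => Finset.sum_comm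
      _ = ∑ j ∈ rb.index, ∑ i ∈ ra.index,
            (Coalgebra.counit (R := F) (ra.left i) * Coalgebra.counit (R := F) (rb.left j)) •
              (antipode (R := F) (rb.right j) * antipode (R := F) (ra.right i)) := by
          refine Finset.sum_congr rfl fun j _ => Finset.sum_congr rfl fun i _ => ?_
          have h := collapseA (reprMul (r1a i) (r1b j))
            (antipode (R := F) (rb.right j) * antipode (R := F) (ra.right i))
          rw [Bialgebra.counit_mul] at h
          simp only [reprMul] at h
          rw [Finset.sum_product] at h
          rw [← h]
      _ = ∑ j ∈ rb.index, Coalgebra.counit (R := F) (rb.left j) •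
            (antipode (R := F) (rb.right j) *
              ∑ i ∈ ra.index, Coalgebra.counit (R := F) (ra.left i) •
                antipode (R := F) (ra.right i)) := by
          refine Finset.sum_congr rfl fun j _ => ?_
          rw [Finset.mul_sum, Finset.smul_sum]
          refine Finset.sum_congr rfl fun i _ => ?_
          rw [mul_comm, mul_smul, mul_smul_comm]
      _ = antipode (R := F) b * antipode (R := F) a := by
          have ha : ∑ i ∈ ra.index, Coalgebra.counit (R := F) (ra.left i) •
              antipode (R := F) (ra.right i) = antipode (R := F) a := by
            simp only [← map_smul]
            rw [← map_sum, _root_.sum_counit_smul ra]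
          rw [ha]
          have : ∀ j, Coalgebra.counit (R := F) (rb.left j) •
              (antipode (R := F) (rb.right j) * antipode (R := F) a)
              = (Coalgebra.counit (R := F) (rb.left j) • antipode (R := F) (rb.right j)) *
                  antipode (R := F) a := by
            intro j; rw [smul_mul_assoc]
          simp only [this]
          rw [← Finset.sum_mul]
          congr 1
          simp only [← map_smul]
          rw [← map_sum, _root_.sum_counit_smul rb]
  have h2 : psi ((∑ i ∈ ra.index, ∑ k ∈ (r1a i).index,
        (r1a i).left k ⊗ₜ[F] ((r1a i).right k ⊗ₜ[F] ra.right i)) ⊗ₜ[F]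
      (∑ j ∈ rb.index, ∑ l ∈ (r1b j).index,
        (r1b j).left l ⊗ₜ[F] ((r1b j).right l ⊗ₜ[F] rb.right j)))
      = antipode (R := F) (a * b) := by
    rw [hA, hB]
    simp only [TensorProduct.sum_tmul, TensorProduct.tmul_sum, map_sum, psi_tmul]
    calc
      ∑ j ∈ rb.index, ∑ l ∈ (r2b j).index, ∑ i ∈ ra.index, ∑ k ∈ (r2a i).index,
          antipode (R := F) (ra.left i * rb.left j) *
            ((r2a i).left k * (r2b j).left l *
              (antipode (R := F) ((r2b j).right l) * antipode (R := F) ((r2a i).right k)))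
        = ∑ j ∈ rb.index, ∑ i ∈ ra.index, ∑ k ∈ (r2a i).index, ∑ l ∈ (r2b j).index,
          antipode (R := F) (ra.left i * rb.left j) *
            ((r2a i).left k * (r2b j).left l *
              (antipode (R := F) ((r2b j).right l) * antipode (R := F) ((r2a i).right k))) := by
          refine Finset.sum_congr rfl fun j _ => ?_
          rw [Finset.sum_comm]
          exact Finset.sum_congr rfl fun i _ => Finset.sum_comm
      _ = ∑ j ∈ rb.index, ∑ i ∈ ra.index, ∑ k ∈ (r2a i).index,
            Coalgebra.counit (R := F) (rb.right j) •
              (antipode (R := F) (ra.left i * rb.left j) *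
                ((r2a i).left k * antipode (R := F) ((r2a i).right k))) := by
          refine Finset.sum_congr rfl fun j _ => Finset.sum_congr rfl fun i _ =>
            Finset.sum_congr rfl fun k _ => ?_
          rw [← Finset.mul_sum, collapseB (r2b j) ((r2a i).left k)
            (antipode (R := F) ((r2a i).right k)), mul_smul_comm]
      _ = ∑ j ∈ rb.index, ∑ i ∈ ra.index,
            Coalgebra.counit (R := F) (rb.right j) •
              (Coalgebra.counit (R := F) (ra.right i) •
                antipode (R := F) (ra.left i * rb.left j)) := by
          refine Finset.sum_congr rfl fun j _ => Finset.sum_congr rfl fun i _ => ?_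
          rw [← Finset.smul_sum, ← Finset.mul_sum,
            HopfAlgebra.sum_mul_antipode_eq_smul (r2a i), mul_smul_comm, mul_one]
      _ = ∑ j ∈ rb.index, Coalgebra.counit (R := F) (rb.right j) •
            antipode (R := F) (a * rb.left j) := by
          refine Finset.sum_congr rfl fun j _ => ?_
          rw [← Finset.smul_sum]
          congr 1
          have : ∀ i ∈ ra.index, Coalgebra.counit (R := F) (ra.right i) •
              antipode (R := F) (ra.left i * rb.left j)
              = antipode (R := F) ((Coalgebra.counit (R := F) (ra.right i) • ra.left i) *
                  rb.left j) := by
            intro i _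
            rw [← map_smul, smul_mul_assoc]
          rw [Finset.sum_congr rfl this, ← map_sum, ← Finset.sum_mul, sum_smul_counit ra]
      _ = antipode (R := F) (a * b) := by
          have : ∀ j ∈ rb.index, Coalgebra.counit (R := F) (rb.right j) •
              antipode (R := F) (a * rb.left j)
              = antipode (R := F) (a * (Coalgebra.counit (R := F) (rb.right j) •
                  rb.left j)) := by
            intro j _
            rw [← map_smul, mul_smul_comm]
          rw [Finset.sum_congr rfl this, ← map_sum, ← Finset.mul_sum, sum_smul_counit rb]
  rw [← h2, h1]

lemma antipode_one' : antipode (R := F) (1 : H) = 1 := by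
  have h := HopfAlgebra.mul_antipode_rTensor_comul_apply (R := F) (1 : H)
  rw [Bialgebra.comul_one, Algebra.TensorProduct.one_def] at h
  simpa using h

/-- Lift a trilinear map to `H ⊗ (H ⊗ H)`. -/
noncomputable def lift3 (T : H →ₗ[F] H →ₗ[F] H →ₗ[F] H) : H ⊗[F] (H ⊗[F] H) →ₗ[F] H :=
  TensorProduct.lift ((TensorProduct.lift.equiv (RingHom.id F) H H H).toLinearMap ∘ₗ T)

@[simp] lemma lift3_tmul (T : H →ₗ[F] H →ₗ[F] H →ₗ[F] H) (x y z : H) :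
    lift3 T (x ⊗ₜ[F] (y ⊗ₜ[F] z)) = T x y z := rfl

lemma shuffle {ι : Type*} {x : H} (r : Coalgebra.Repr F x ι) (r₁ : ∀ i, Coalgebra.Repr F (r.left i) (H × H))
    (r₂ : ∀ i, Coalgebra.Repr F (r.right i) (H × H)) (T : H →ₗ[F] H →ₗ[F] H →ₗ[F] H) :
    ∑ i ∈ r.index, ∑ k ∈ (r₁ i).index,
        T ((r₁ i).left k) ((r₁ i).right k) (r.right i)
      = ∑ i ∈ r.index, ∑ k ∈ (r₂ i).index,
        T (r.left i) ((r₂ i).left k) ((r₂ i).right k) := by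
  have h := Coalgebra.sum_tmul_tmul_eq r r₁ r₂
  have h2 := congrArg (lift3 T) h
  simpa [map_sum] using h2

end Aux

/-- For a finite-dimensional Hopf algebra `H` with left integrals `Λ ∈ H` and `φ ∈ Ĥ`
normalized by `φ(Λ) = 1`, the composite `m̃ ∘ Δ : H → H` (where
`m̃(a ⊗ b) = a₍₁₎ φ(S⁻¹(b) a₍₂₎)`) equals multiplication by the scalar `φ(1)`. -/
theorem integral_multiplication_comp_comul
    (F H : Type*) [Field F] [Ring H] [HopfAlgebra F H] [FiniteDimensional F H]
    (Λ : H) (hΛ0 : Λ ≠ 0)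
    (hΛ : ∀ x : H, x * Λ = Coalgebra.counit (R := F) x • Λ)
    (φ : H →ₗ[F] F) (hφ0 : φ ≠ 0)
    (hφ : ∀ x : H,
      TensorProduct.rid F H
        (TensorProduct.map (LinearMap.id : H →ₗ[F] H) φ (Coalgebra.comul (R := F) x))
        = φ x • (1 : H))
    (hnorm : φ Λ = 1)
    (Si : H →ₗ[F] H)
    (hSi₁ : Si ∘ₗ HopfAlgebra.antipode (R := F) = (LinearMap.id : H →ₗ[F] H))
    (hSi₂ : HopfAlgebra.antipode (R := F) ∘ₗ Si = (LinearMap.id : H →ₗ[F] H))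
    (M : H ⊗[F] H →ₗ[F] H)
    (hM : ∀ a b : H, M (a ⊗ₜ[F] b) =
      TensorProduct.rid F H
        (TensorProduct.map (LinearMap.id : H →ₗ[F] H) (φ ∘ₗ LinearMap.mulLeft F (Si b))
          (Coalgebra.comul (R := F) a))) :
    ∀ a : H, M (Coalgebra.comul (R := F) a) = φ 1 • a := by
  classical
  have hSiS : ∀ x : H, Si (HopfAlgebra.antipode (R := F) x) = x := fun x => LinearMap.congr_fun hSi₁ x
  have hSSi : ∀ x : H, HopfAlgebra.antipode (R := F) (Si x) = x := fun x => LinearMap.congr_fun hSi₂ x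
  have hSinj : Function.Injective (HopfAlgebra.antipode (R := F) : H →ₗ[F] H) := by
    intro x y hxy
    have := congrArg Si hxy
    rwa [hSiS, hSiS] at this
  have hSi_one : Si (1 : H) = 1 := by
    have := hSiS (1 : H)
    rwa [antipode_one'] at this
  have hSi_mul : ∀ x y : H, Si (x * y) = Si y * Si x := by
    intro x y
    apply hSinj
    rw [hSSi, antipode_mul_rev, hSSi, hSSi]
  -- the key identity: `∑ Si(x₍₂₎) x₍₁₎ = ε(x) 1`
  have KI : ∀ (x : H) (r : Coalgebra.Repr F x (H × H)),
      ∑ i ∈ r.index, Si (r.right i) * r.left i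
        = Coalgebra.counit (R := F) x • (1 : H) := by
    intro x r
    have h := HopfAlgebra.sum_antipode_mul_eq_smul (R := F) r
    have h2 := congrArg Si h
    rw [map_sum, map_smul, hSi_one] at h2
    rw [← h2]
    refine Finset.sum_congr rfl fun i _ => ?_
    rw [hSi_mul, hSiS]
  -- the trilinear map `x ⊗ y ⊗ z ↦ φ(Si z * y) • x`
  let B : H →ₗ[F] H →ₗ[F] F := ((LinearMap.mul F H).compr₂ φ) ∘ₗ Si
  let T : H →ₗ[F] H →ₗ[F] H →ₗ[F] H := LinearMap.mk₂ F
    (fun x y => (B.flip y).smulRight x)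
    (fun x x' y => by ext z; simp [smul_add])
    (fun c x y => by
      ext z
      simp only [LinearMap.smulRight_apply, LinearMap.smul_apply]
      rw [smul_comm])
    (fun x y y' => by ext z; simp [map_add, add_smul])
    (fun c x y => by
      ext z
      simp only [LinearMap.smulRight_apply, LinearMap.flip_apply, map_smul,
        LinearMap.smul_apply, smul_eq_mul]
      rw [mul_smul])
  have hT : ∀ x y z : H, T x y z = φ (Si z * y) • x := fun x y z => rfl
  intro a
  let ra := Coalgebra.Repr.arbitrary F a
  let r1 : ∀ i, Coalgebra.Repr F (ra.left i) (H × H) := fun i => Coalgebra.Repr.arbitrary F _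
  let r2 : ∀ i, Coalgebra.Repr F (ra.right i) (H × H) := fun i => Coalgebra.Repr.arbitrary F _
  have expand : M (Coalgebra.comul (R := F) a)
      = ∑ i ∈ ra.index, ∑ k ∈ (r1 i).index,
          T ((r1 i).left k) ((r1 i).right k) (ra.right i) := by
    rw [show (Coalgebra.comul (R := F) a : H ⊗[F] H) = _ from (ra.eq).symm, map_sum]
    refine Finset.sum_congr rfl fun i _ => ?_
    rw [hM]
    rw [show (Coalgebra.comul (R := F) (ra.left i) : H ⊗[F] H) = _ from ((r1 i).eq).symm,
      map_sum, map_sum]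
    refine Finset.sum_congr rfl fun k _ => ?_
    simp [hT]
  rw [expand, shuffle ra r1 r2 T]
  have : ∀ i ∈ ra.index, ∑ k ∈ (r2 i).index,
      T (ra.left i) ((r2 i).left k) ((r2 i).right k)
      = (Coalgebra.counit (R := F) (ra.right i) * φ 1) • ra.left i := by
    intro i _
    have : ∑ k ∈ (r2 i).index, T (ra.left i) ((r2 i).left k) ((r2 i).right k)
        = (∑ k ∈ (r2 i).index, φ (Si ((r2 i).right k) * (r2 i).left k)) • ra.left i := by
      simp only [hT]
      rw [Finset.sum_smul]
    rw [this, ← map_sum, KI _ (r2 i), map_smul, smul_eq_mul]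
  rw [Finset.sum_congr rfl this]
  have : ∀ i ∈ ra.index, (Coalgebra.counit (R := F) (ra.right i) * φ 1) • ra.left i
      = φ 1 • (Coalgebra.counit (R := F) (ra.right i) • ra.left i) := by
    intro i _
    rw [mul_comm, mul_smul]
  rw [Finset.sum_congr rfl this, ← Finset.smul_sum, sum_smul_counit ra]
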